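/- Let y ∈ ℝ³ satisfy 0 < y₁ ≤ y_j and 0 < 2y_j + Σ_{k≠j} y_k ≤ π/2 for all j = 1,2,3, and y₃ ≥ y₂. Define h₁(y) = cos(2y₁+y₂+y₃) sin y₂ sin y₃ / (cos(y₁+y₂+y₃) sin y₁ sin y₂ sin y₃)^{2/3}. Then there exists a universal constant c > 0 (independent of y) such that h₁(y) ≤ c·(sin y₃ / sin y₁) ≤ 2c·(y₃/y₁). -/

import Mathlib

/-- Key estimate: for `y ∈ ℝ³` with `0 < y₁ ≤ y_j`, `0 < 2y_j + Σ_{k≠j} y_k ≤ π/2`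
for all `j`, and `y₃ ≥ y₂`, one has
`h₁(y) ≤ c (sin y₃ / sin y₁) ≤ 2c (y₃/y₁)` for a universal constant `c > 0`. -/
theorem stmt14 :
    ∃ c : ℝ, 0 < c ∧
      ∀ y : Fin 3 → ℝ,
        (∀ j, 0 < y 0 ∧ y 0 ≤ y j) →
        (∀ j, 0 < 2 * y j + ∑ k ∈ Finset.univ.erase j, y k ∧
              2 * y j + ∑ k ∈ Finset.univ.erase j, y k ≤ Real.pi / 2) →
        y 1 ≤ y 2 →
        (Real.cos (2 * y 0 + y 1 + y 2) * Real.sin (y 1) * Real.sin (y 2) /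
            (Real.cos (y 0 + y 1 + y 2) * Real.sin (y 0) * Real.sin (y 1) * Real.sin (y 2))
              ^ ((2:ℝ)/3)
          ≤ c * (Real.sin (y 2) / Real.sin (y 0))) ∧
        c * (Real.sin (y 2) / Real.sin (y 0)) ≤ 2 * c * (y 2 / y 0) := by
  refine ⟨1, one_pos, fun y h1 h2 hbd => ?_⟩
  have ha : 0 < y 0 := (h1 0).1
  have hab : y 0 ≤ y 1 := (h1 1).2
  have had : y 0 ≤ y 2 := (h1 2).2
  have hπ := Real.pi_pos
  have hsum : ∀ j : Fin 3, ∑ k ∈ Finset.univ.erase j, y k = (y 0 + y 1 + y 2) - y j := by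
    intro j
    rw [Finset.sum_erase_eq_sub (Finset.mem_univ j), Fin.sum_univ_three]
  have h20 := (h2 0).2; rw [hsum] at h20
  have h22 := (h2 2).2; rw [hsum] at h22
  set a := y 0 with hA
  set b := y 1 with hB
  set d := y 2 with hD
  -- basic facts
  have hb : 0 < b := lt_of_lt_of_le ha hab
  have hd : 0 < d := lt_of_lt_of_le ha had
  have hSa : a + (a + b + d) ≤ Real.pi / 2 := by linarith
  have hSd : d + (a + b + d) ≤ Real.pi / 2 := by linarith
  have hsa0 : 0 < Real.sin a :=
    Real.sin_pos_of_pos_of_lt_pi ha (by linarith)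
  have hsb0 : 0 < Real.sin b :=
    Real.sin_pos_of_pos_of_lt_pi hb (by linarith)
  have hsd0 : 0 < Real.sin d :=
    Real.sin_pos_of_pos_of_lt_pi hd (by linarith)
  have hsad : Real.sin a ≤ Real.sin d :=
    Real.sin_le_sin_of_le_of_le_pi_div_two (by linarith) (by linarith) had
  have hsbd : Real.sin b ≤ Real.sin d :=
    Real.sin_le_sin_of_le_of_le_pi_div_two (by linarith) (by linarith) hbd
  have hcS0 : 0 < Real.cos (a + b + d) :=
    Real.cos_pos_of_mem_Ioo ⟨by linarith, by linarith⟩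
  have hcS1 : Real.cos (a + b + d) ≤ 1 := Real.cos_le_one _
  have hcT0 : 0 ≤ Real.cos (2 * a + b + d) :=
    Real.cos_nonneg_of_mem_Icc ⟨by linarith, by linarith⟩
  have hcTS : Real.cos (2 * a + b + d) ≤ Real.cos (a + b + d) :=
    Real.cos_le_cos_of_nonneg_of_le_pi (by linarith) (by linarith) (by linarith)
  set sa := Real.sin a
  set sb := Real.sin b
  set sd := Real.sin d
  set cS := Real.cos (a + b + d)
  set cT := Real.cos (2 * a + b + d)
  have hP : 0 < cS * sa * sb * sd := by positivity
  have hPpow : 0 < (cS * sa * sb * sd) ^ ((2:ℝ)/3) := Real.rpow_pos_of_pos hP _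
  constructor
  · rw [one_mul, div_le_div_iff₀ hPpow hsa0]
    -- suffices to compare cubes
    have hcube : ((cS * sa * sb * sd) ^ ((2:ℝ)/3)) ^ (3:ℕ) = (cS * sa * sb * sd) ^ (2:ℕ) := by
      rw [← Real.rpow_natCast ((cS * sa * sb * sd) ^ ((2:ℝ)/3)) 3,
        ← Real.rpow_mul hP.le, ← Real.rpow_natCast (cS * sa * sb * sd) 2]
      norm_num
    have hL0 : 0 ≤ cT * sb * sd * sa := by positivity
    have hR0 : 0 ≤ sd * (cS * sa * sb * sd) ^ ((2:ℝ)/3) := by positivity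
    refine (pow_le_pow_iff_left₀ hL0 hR0 (three_ne_zero)).mp ?_
    have step : cT ^ 3 * (sa * sb) ≤ cS ^ 2 * (sd * sd) := by
      have h1 : cT ^ 3 ≤ cS ^ 2 := by
        have h1a : cT ^ 3 ≤ cS ^ 3 := pow_le_pow_left₀ hcT0 hcTS 3
        nlinarith [sq_nonneg cS]
      have h2 : sa * sb ≤ sd * sd := mul_le_mul hsad hsbd hsb0.le hsd0.le
      exact mul_le_mul h1 h2 (by positivity) (by positivity)
    calc (cT * sb * sd * sa) ^ 3
        = cT ^ 3 * (sa * sb) * (sa ^ 2 * sb ^ 2 * sd ^ 3) := by ring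
      _ ≤ cS ^ 2 * (sd * sd) * (sa ^ 2 * sb ^ 2 * sd ^ 3) := by
          exact mul_le_mul_of_nonneg_right step (by positivity)
      _ = sd ^ 3 * (cS * sa * sb * sd) ^ (2:ℕ) := by ring
      _ = (sd * (cS * sa * sb * sd) ^ ((2:ℝ)/3)) ^ 3 := by
          conv_rhs => rw [mul_pow, hcube]
  · have h1 : sd ≤ d := by
      have := Real.sin_le hd.le
      simpa using this
    have h2 : a / 2 ≤ sa := by
      have h3 : 2 / Real.pi * a ≤ sa := Real.mul_le_sin ha.le (by linarith)
      have h4 : Real.pi ≤ 4 := Real.pi_le_four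
      have h7 : (1:ℝ)/2 ≤ 2 / Real.pi := by
        rw [div_le_div_iff₀ (by norm_num) hπ]; linarith
      have : a / 2 ≤ 2 / Real.pi * a := by
        calc a / 2 = (1/2) * a := by ring
          _ ≤ 2 / Real.pi * a := mul_le_mul_of_nonneg_right h7 ha.le
      linarith
    have h5 : sd / sa ≤ d / (a / 2) :=
      div_le_div₀ hd.le h1 (by positivity) h2
    have h6 : d / (a / 2) = 2 * (d / a) := by
      field_simp
    rw [h6] at h5
    linarith
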